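/- For every unit quaternion q ∈ ℍ₁, the linear map u ↦ q u q* sends purely imaginary quaternions to purely imaginary quaternions of the same norm; identifying ℝ³ with the purely imaginary quaternions via the basis (i, j, k), the matrix Φ(q) of this map belongs to SO₃(ℝ). Moreover, Φ : ℍ₁ → SO₃(ℝ) is a surjective group homomorphism, and for q, q' ∈ ℍ₁ one has Φ(q) = Φ(q') if and only if q' = q or q' = −q. -/

import Mathlib

open Matrix Quaternion

/-- The space of `3 × 3` real matrices. -/
abbrev Mat3 := Matrix (Fin 3) (Fin 3) ℝ

/-- `SO₃(ℝ)`: real `3 × 3` matrices with `AᵀA = I₃` and `det A = 1`. -/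
def SO3 : Set Mat3 := {A | Aᵀ * A = 1 ∧ A.det = 1}

/-- Identification of `ℝ³` with purely imaginary quaternions via the basis `(i, j, k)`. -/
def toQuat (u : Fin 3 → ℝ) : ℍ[ℝ] := ⟨0, u 0, u 1, u 2⟩

/-- The vector of imaginary parts of a quaternion. -/
def imPart (x : ℍ[ℝ]) : Fin 3 → ℝ := ![x.imI, x.imJ, x.imK]

/-- The matrix, in the basis `(i, j, k)` of purely imaginary quaternions, of the linear map
`u ↦ q u q*`. -/
noncomputable def Phi (q : ℍ[ℝ]) : Mat3 :=
  Matrix.of fun i j => imPart (q * toQuat (fun k => if k = j then 1 else 0) * star q) i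

abbrev QA := QuaternionAlgebra ℝ (-1) 0 (-1)

@[simp] lemma re_mul_AA (a : QA) (b : QA) :
    (@HMul.hMul ℍ[ℝ] ℍ[ℝ] ℍ[ℝ] _ a b).re =
      a.re * b.re - a.imI * b.imI - a.imJ * b.imJ - a.imK * b.imK :=
  Quaternion.re_mul a b

@[simp] lemma re_mul_QA (a : ℍ[ℝ]) (b : QA) :
    (@HMul.hMul ℍ[ℝ] ℍ[ℝ] ℍ[ℝ] _ a b).re =
      a.re * b.re - a.imI * b.imI - a.imJ * b.imJ - a.imK * b.imK :=
  Quaternion.re_mul a b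

@[simp] lemma re_mul_AQ (a : QA) (b : ℍ[ℝ]) :
    (@HMul.hMul ℍ[ℝ] ℍ[ℝ] ℍ[ℝ] _ a b).re =
      a.re * b.re - a.imI * b.imI - a.imJ * b.imJ - a.imK * b.imK :=
  Quaternion.re_mul a b

@[simp] lemma imI_mul_AA (a : QA) (b : QA) :
    (@HMul.hMul ℍ[ℝ] ℍ[ℝ] ℍ[ℝ] _ a b).imI =
      a.re * b.imI + a.imI * b.re + a.imJ * b.imK - a.imK * b.imJ :=
  Quaternion.imI_mul a b

@[simp] lemma imI_mul_QA (a : ℍ[ℝ]) (b : QA) :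
    (@HMul.hMul ℍ[ℝ] ℍ[ℝ] ℍ[ℝ] _ a b).imI =
      a.re * b.imI + a.imI * b.re + a.imJ * b.imK - a.imK * b.imJ :=
  Quaternion.imI_mul a b

@[simp] lemma imI_mul_AQ (a : QA) (b : ℍ[ℝ]) :
    (@HMul.hMul ℍ[ℝ] ℍ[ℝ] ℍ[ℝ] _ a b).imI =
      a.re * b.imI + a.imI * b.re + a.imJ * b.imK - a.imK * b.imJ :=
  Quaternion.imI_mul a b

@[simp] lemma imJ_mul_AA (a : QA) (b : QA) :
    (@HMul.hMul ℍ[ℝ] ℍ[ℝ] ℍ[ℝ] _ a b).imJ =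
      a.re * b.imJ - a.imI * b.imK + a.imJ * b.re + a.imK * b.imI :=
  Quaternion.imJ_mul a b

@[simp] lemma imJ_mul_QA (a : ℍ[ℝ]) (b : QA) :
    (@HMul.hMul ℍ[ℝ] ℍ[ℝ] ℍ[ℝ] _ a b).imJ =
      a.re * b.imJ - a.imI * b.imK + a.imJ * b.re + a.imK * b.imI :=
  Quaternion.imJ_mul a b

@[simp] lemma imJ_mul_AQ (a : QA) (b : ℍ[ℝ]) :
    (@HMul.hMul ℍ[ℝ] ℍ[ℝ] ℍ[ℝ] _ a b).imJ =
      a.re * b.imJ - a.imI * b.imK + a.imJ * b.re + a.imK * b.imI :=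
  Quaternion.imJ_mul a b

@[simp] lemma imK_mul_AA (a : QA) (b : QA) :
    (@HMul.hMul ℍ[ℝ] ℍ[ℝ] ℍ[ℝ] _ a b).imK =
      a.re * b.imK + a.imI * b.imJ - a.imJ * b.imI + a.imK * b.re :=
  Quaternion.imK_mul a b

@[simp] lemma imK_mul_QA (a : ℍ[ℝ]) (b : QA) :
    (@HMul.hMul ℍ[ℝ] ℍ[ℝ] ℍ[ℝ] _ a b).imK =
      a.re * b.imK + a.imI * b.imJ - a.imJ * b.imI + a.imK * b.re :=
  Quaternion.imK_mul a b

@[simp] lemma imK_mul_AQ (a : QA) (b : ℍ[ℝ]) :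
    (@HMul.hMul ℍ[ℝ] ℍ[ℝ] ℍ[ℝ] _ a b).imK =
      a.re * b.imK + a.imI * b.imJ - a.imJ * b.imI + a.imK * b.re :=
  Quaternion.imK_mul a b

@[simp] lemma re_star_A (a : QA) : (@star ℍ[ℝ] _ a).re = a.re :=
  Quaternion.re_star a

@[simp] lemma imI_star_A (a : QA) : (@star ℍ[ℝ] _ a).imI = -a.imI :=
  Quaternion.imI_star a

@[simp] lemma imJ_star_A (a : QA) : (@star ℍ[ℝ] _ a).imJ = -a.imJ :=
  Quaternion.imJ_star a

@[simp] lemma imK_star_A (a : QA) : (@star ℍ[ℝ] _ a).imK = -a.imK :=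
  Quaternion.imK_star a

lemma normSq_mk_H (a b c d : ℝ) : normSq (⟨a, b, c, d⟩ : ℍ[ℝ]) = a ^ 2 + b ^ 2 + c ^ 2 + d ^ 2 :=
  Quaternion.normSq_def' _

/-- For a unit quaternion `q`, conjugation `u ↦ q u q*` preserves purely imaginary
quaternions and their norms; its matrix `Φ(q)` lies in `SO₃(ℝ)`; `Φ` is a surjective group
homomorphism from the unit quaternions onto `SO₃(ℝ)`, and `Φ(q) = Φ(q')` iff `q' = ±q`. -/
lemma PhiMat (w x y z : ℝ) : Phi ⟨w,x,y,z⟩ =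
    !![w^2+x^2-y^2-z^2, 2*(x*y-w*z), 2*(x*z+w*y);
       2*(x*y+w*z), w^2-x^2+y^2-z^2, 2*(y*z-w*x);
       2*(x*z-w*y), 2*(y*z+w*x), w^2-x^2-y^2+z^2] := by
  ext i j
  fin_cases i <;> fin_cases j <;>
    simp [Phi, toQuat, imPart, Quaternion.imI_mul, Quaternion.imJ_mul, Quaternion.imK_mul,
      Quaternion.re_mul] <;> ring

lemma re_conjAct (q u : ℍ[ℝ]) : (q * u * star q).re = normSq q * u.re := by
  simp [Quaternion.re_mul, Quaternion.normSq_def', Quaternion.re_star, Quaternion.imI_star,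
    Quaternion.imJ_star, Quaternion.imK_star, Quaternion.imI_mul, Quaternion.imJ_mul,
    Quaternion.imK_mul]
  ring

lemma normSq_eq_one (q : ℍ[ℝ]) (h : ‖q‖ = 1) : normSq q = 1 := by
  rw [Quaternion.normSq_eq_norm_mul_self, h, mul_one]

lemma comp_sq_eq_one (q : ℍ[ℝ]) (h : ‖q‖ = 1) :
    q.re^2 + q.imI^2 + q.imJ^2 + q.imK^2 = 1 := by
  rw [← Quaternion.normSq_def']
  exact normSq_eq_one q h

lemma Phi_transpose (w x y z : ℝ) : (Phi ⟨w,x,y,z⟩)ᵀ = Phi ⟨w,-x,-y,-z⟩ := by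
  rw [PhiMat, PhiMat]
  ext i j
  fin_cases i <;> fin_cases j <;> simp [Matrix.transpose_apply] <;> try ring

lemma Phi_one : Phi ⟨1,0,0,0⟩ = 1 := by
  rw [PhiMat]
  ext i j
  fin_cases i <;> fin_cases j <;>
    simp [Matrix.one_apply, Matrix.vecHead, Matrix.vecTail, Function.comp]

lemma Phi_mul (q q' : ℍ[ℝ]) : Phi (q * q') = Phi q * Phi q' := by
  obtain ⟨w,x,y,z⟩ := q; obtain ⟨w',x',y',z'⟩ := q'
  have hm : (⟨w,x,y,z⟩ * ⟨w',x',y',z'⟩ : ℍ[ℝ]) =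
      ⟨w*w' - x*x' - y*y' - z*z', w*x' + x*w' + y*z' - z*y',
       w*y' - x*z' + y*w' + z*x', w*z' + x*y' - y*x' + z*w'⟩ := by
    apply QuaternionAlgebra.ext <;>
      simp [Quaternion.re_mul, Quaternion.imI_mul, Quaternion.imJ_mul, Quaternion.imK_mul] <;>
      ring
  rw [hm, PhiMat, PhiMat, PhiMat]
  ext i j
  fin_cases i <;> fin_cases j <;>
    simp [Matrix.mul_apply, Fin.sum_univ_three] <;> ring

lemma PhiSO3 (q : ℍ[ℝ]) (h : ‖q‖ = 1) : Phi q ∈ SO3 := by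
  have hn := comp_sq_eq_one q h
  obtain ⟨w,x,y,z⟩ := q
  have hn' : w^2 + x^2 + y^2 + z^2 = 1 := hn
  have hsq : (⟨w,-x,-y,-z⟩ * ⟨w,x,y,z⟩ : ℍ[ℝ]) = ⟨1,0,0,0⟩ := by
    apply QuaternionAlgebra.ext <;>
      simp [Quaternion.re_mul, Quaternion.imI_mul, Quaternion.imJ_mul, Quaternion.imK_mul] <;>
      first
        | ring1
        | linear_combination hn'
        | linear_combination -hn'
  constructor
  · rw [Phi_transpose, ← Phi_mul (⟨w,-x,-y,-z⟩ : ℍ[ℝ]) ⟨w,x,y,z⟩, hsq, Phi_one]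
  · rw [PhiMat, Matrix.det_fin_three]
    simp
    linear_combination ((w^2+x^2+y^2+z^2)^2 + (w^2+x^2+y^2+z^2) + 1) * hn'


lemma Phi_mulVec (q : ℍ[ℝ]) (u : Fin 3 → ℝ) : Phi q *ᵥ u = imPart (q * toQuat u * star q) := by
  ext i
  fin_cases i <;>
    simp [Phi, toQuat, imPart, mulVec, dotProduct, Fin.sum_univ_three,
      Quaternion.imI_mul, Quaternion.imJ_mul, Quaternion.imK_mul, Quaternion.re_mul] <;> ring

lemma Phi_neg (q : ℍ[ℝ]) : Phi (-q) = Phi q := by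
  obtain ⟨w,x,y,z⟩ := q
  change Phi ⟨-w, -x, -y, -z⟩ = Phi ⟨w, x, y, z⟩
  rw [PhiMat, PhiMat]
  ext i j
  fin_cases i <;> fin_cases j <;> simp <;> try ring

lemma pm_of_Phi_eq (q q' : ℍ[ℝ]) (hq : ‖q‖ = 1) (hq' : ‖q'‖ = 1)
    (hphi : Phi q = Phi q') : q' = q ∨ q' = -q := by
  have hq1 : star q * q = 1 := by
    rw [Quaternion.star_mul_self, normSq_eq_one q hq]; exact_mod_cast rfl
  have hq2 : q * star q = 1 := by
    rw [Quaternion.self_mul_star, normSq_eq_one q hq]; exact_mod_cast rfl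
  have hq'1 : star q' * q' = 1 := by
    rw [Quaternion.star_mul_self, normSq_eq_one q' hq']; exact_mod_cast rfl
  have hqne : q ≠ 0 := by
    intro h0; rw [h0, norm_zero] at hq; norm_num at hq
  have hconj : ∀ u : ℍ[ℝ], u.re = 0 → q * u * star q = q' * u * star q' := by
    intro u hu
    have hu' : toQuat (imPart u) = u := by
      apply QuaternionAlgebra.ext <;> simp [toQuat, imPart, hu]
    have h1 := Phi_mulVec q (imPart u)
    have h2 := Phi_mulVec q' (imPart u)
    rw [hu'] at h1 h2
    have him : imPart (q * u * star q) = imPart (q' * u * star q') := by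
      rw [← h1, ← h2, hphi]
    apply QuaternionAlgebra.ext
    · rw [re_conjAct, re_conjAct, hu]; ring
    · simpa [imPart] using congrFun him 0
    · simpa [imPart] using congrFun him 1
    · simpa [imPart] using congrFun him 2
  have comm : ∀ u : ℍ[ℝ], u.re = 0 → u * (star q * q') = (star q * q') * u := by
    intro u hu
    apply mul_left_cancel₀ hqne
    have h := hconj u hu
    calc q * (u * (star q * q')) = (q * u * star q) * q' := by noncomm_ring
      _ = (q' * u * star q') * q' := by rw [h]
      _ = q' * u * (star q' * q') := by noncomm_ring
      _ = q' * u := by rw [hq'1, mul_one]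
      _ = (q * star q) * (q' * u) := by rw [hq2, one_mul]
      _ = q * ((star q * q') * u) := by noncomm_ring
  set p := star q * q' with hp
  have hi := comm ⟨0,1,0,0⟩ rfl
  have hj := comm ⟨0,0,1,0⟩ rfl
  have hiJ := congrArg QuaternionAlgebra.imJ hi
  have hiK := congrArg QuaternionAlgebra.imK hi
  have hjK := congrArg QuaternionAlgebra.imK hj
  simp only [Quaternion.imJ_mul, Quaternion.imK_mul, imJ_mul_AQ, imK_mul_AQ, imJ_mul_QA,
    imK_mul_QA] at hiJ hiK hjK
  have hpJ : p.imJ = 0 := by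
    simp at hiK; linarith
  have hpK : p.imK = 0 := by
    simp at hiJ; linarith
  have hpI : p.imI = 0 := by
    simp at hjK; linarith
  have hpn : normSq p = 1 := by
    rw [hp, _root_.map_mul, Quaternion.normSq_star, normSq_eq_one q hq, normSq_eq_one q' hq', one_mul]
  rw [Quaternion.normSq_def', hpI, hpJ, hpK] at hpn
  have hre : (p.re - 1) * (p.re + 1) = 0 := by linear_combination hpn
  have hq'eq : q' = q * p := by
    rw [hp]
    calc q' = (q * star q) * q' := by rw [hq2, one_mul]
      _ = q * (star q * q') := by noncomm_ring
  rcases mul_eq_zero.mp hre with h1 | h1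
  · left
    have hp1 : p = 1 := by
      apply QuaternionAlgebra.ext <;> simp [hpI, hpJ, hpK] <;> linarith
    rw [hq'eq, hp1, mul_one]
  · right
    have hp1 : p = -1 := by
      apply QuaternionAlgebra.ext <;> simp [hpI, hpJ, hpK] <;> linarith
    rw [hq'eq, hp1, mul_neg_one]

lemma Phi_smul (r : ℝ) (q : ℍ[ℝ]) : Phi (r • q) = (r^2) • Phi q := by
  obtain ⟨w,x,y,z⟩ := q
  change Phi ⟨r • w, r • x, r • y, r • z⟩ = r ^ 2 • Phi ⟨w, x, y, z⟩
  rw [PhiMat, PhiMat]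
  ext i j
  fin_cases i <;> fin_cases j <;> simp [Matrix.smul_apply, smul_eq_mul] <;> ring


lemma exists_of_q0 (A : Mat3) (q0 : ℍ[ℝ]) (s : ℝ) (hs : 0 < s) (hn : normSq q0 = 4*s)
    (hP : Phi q0 = (4*s) • A) : ∃ q : ℍ[ℝ], ‖q‖ = 1 ∧ Phi q = A := by
  have hq0 : q0 ≠ 0 := by
    intro h0
    rw [h0] at hn
    simp only [map_zero] at hn
    nlinarith
  refine ⟨‖q0‖⁻¹ • q0, norm_smul_inv_norm hq0, ?_⟩
  rw [Phi_smul, hP]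
  have h2 : ‖q0‖^2 = 4*s := by rw [sq, ← Quaternion.normSq_eq_norm_mul_self, hn]
  rw [inv_pow, h2, smul_smul, inv_mul_cancel₀ (by positivity), one_smul]

lemma so3_surj (A : Mat3) (hA : A ∈ SO3) : ∃ q : ℍ[ℝ], ‖q‖ = 1 ∧ Phi q = A := by
  obtain ⟨hO, hdet⟩ := hA
  have hO' : A * Aᵀ = 1 := mul_eq_one_comm.mp hO
  have hadj : Aᵀ = adjugate A := by
    have h2 : A * adjugate A = 1 := by rw [Matrix.mul_adjugate, hdet, one_smul]
    calc Aᵀ = Aᵀ * (A * adjugate A) := by rw [h2, mul_one]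
      _ = (Aᵀ * A) * adjugate A := by rw [mul_assoc]
      _ = adjugate A := by rw [hO, one_mul]
  rw [Matrix.adjugate_fin_three] at hadj
  have hcol : ∀ i j, A 0 i * A 0 j + A 1 i * A 1 j + A 2 i * A 2 j = if i = j then 1 else 0 := by
    intro i j
    have := congrFun (congrFun hO i) j
    simpa [Matrix.mul_apply, Matrix.transpose_apply, Fin.sum_univ_three, Matrix.one_apply]
      using this
  have hrow : ∀ i j, A i 0 * A j 0 + A i 1 * A j 1 + A i 2 * A j 2 = if i = j then 1 else 0 := by
    intro i j
    have := congrFun (congrFun hO' i) j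
    simpa [Matrix.mul_apply, Matrix.transpose_apply, Fin.sum_univ_three, Matrix.one_apply]
      using this
  have hC00 : A 0 0 * A 0 0 + A 1 0 * A 1 0 + A 2 0 * A 2 0 = 1 := by simpa using hcol 0 0
  have hC11 : A 0 1 * A 0 1 + A 1 1 * A 1 1 + A 2 1 * A 2 1 = 1 := by simpa using hcol 1 1
  have hC22 : A 0 2 * A 0 2 + A 1 2 * A 1 2 + A 2 2 * A 2 2 = 1 := by simpa using hcol 2 2
  have hC01 : A 0 0 * A 0 1 + A 1 0 * A 1 1 + A 2 0 * A 2 1 = 0 := by simpa using hcol 0 1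
  have hC02 : A 0 0 * A 0 2 + A 1 0 * A 1 2 + A 2 0 * A 2 2 = 0 := by simpa using hcol 0 2
  have hC12 : A 0 1 * A 0 2 + A 1 1 * A 1 2 + A 2 1 * A 2 2 = 0 := by simpa using hcol 1 2
  have hR00 : A 0 0 * A 0 0 + A 0 1 * A 0 1 + A 0 2 * A 0 2 = 1 := by simpa using hrow 0 0
  have hR11 : A 1 0 * A 1 0 + A 1 1 * A 1 1 + A 1 2 * A 1 2 = 1 := by simpa using hrow 1 1
  have hR22 : A 2 0 * A 2 0 + A 2 1 * A 2 1 + A 2 2 * A 2 2 = 1 := by simpa using hrow 2 2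
  have hR01 : A 0 0 * A 1 0 + A 0 1 * A 1 1 + A 0 2 * A 1 2 = 0 := by simpa using hrow 0 1
  have hR02 : A 0 0 * A 2 0 + A 0 1 * A 2 1 + A 0 2 * A 2 2 = 0 := by simpa using hrow 0 2
  have hR12 : A 1 0 * A 2 0 + A 1 1 * A 2 1 + A 1 2 * A 2 2 = 0 := by simpa using hrow 1 2
  have hK00 : A 0 0 = A 1 1 * A 2 2 - A 1 2 * A 2 1 := by
    simpa using congrFun (congrFun hadj 0) 0
  have hK01 : A 1 0 = -(A 0 1 * A 2 2) + A 0 2 * A 2 1 := by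
    simpa using congrFun (congrFun hadj 0) 1
  have hK02 : A 2 0 = A 0 1 * A 1 2 - A 0 2 * A 1 1 := by
    simpa using congrFun (congrFun hadj 0) 2
  have hK10 : A 0 1 = -(A 1 0 * A 2 2) + A 1 2 * A 2 0 := by
    simpa using congrFun (congrFun hadj 1) 0
  have hK11 : A 1 1 = A 0 0 * A 2 2 - A 0 2 * A 2 0 := by
    simpa using congrFun (congrFun hadj 1) 1
  have hK12 : A 2 1 = -(A 0 0 * A 1 2) + A 0 2 * A 1 0 := by
    simpa using congrFun (congrFun hadj 1) 2
  have hK20 : A 0 2 = A 1 0 * A 2 1 - A 1 1 * A 2 0 := by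
    simpa using congrFun (congrFun hadj 2) 0
  have hK21 : A 1 2 = -(A 0 0 * A 2 1) + A 0 1 * A 2 0 := by
    simpa using congrFun (congrFun hadj 2) 1
  have hK22 : A 2 2 = A 0 0 * A 1 1 - A 0 1 * A 1 0 := by
    simpa using congrFun (congrFun hadj 2) 2
  have hcases : 1 ≤ 1 + A 0 0 + A 1 1 + A 2 2 ∨ 1 ≤ 1 + A 0 0 - A 1 1 - A 2 2 ∨
      1 ≤ 1 - A 0 0 + A 1 1 - A 2 2 ∨ 1 ≤ 1 - A 0 0 - A 1 1 + A 2 2 := by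
    by_contra hcon
    push_neg at hcon
    obtain ⟨h1, h2, h3, h4⟩ := hcon
    linarith
  rcases hcases with hs | hs | hs | hs
  · -- case 0
    refine exists_of_q0 A (⟨(1 + A 0 0 + A 1 1 + A 2 2), (A 2 1 - A 1 2), (A 0 2 - A 2 0), (A 1 0 - A 0 1)⟩ : ℍ[ℝ]) (1 + A 0 0 + A 1 1 + A 2 2) (by linarith) ?_ ?_
    · rw [normSq_mk_H]
      show (1 + A 0 0 + A 1 1 + A 2 2)^2 + (A 2 1 - A 1 2)^2 + (A 0 2 - A 2 0)^2 + (A 1 0 - A 0 1)^2 = 4 * (1 + A 0 0 + A 1 1 + A 2 2)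
      linear_combination (1) * hC00 + (1) * hC11 + (2) * A 2 2 * hC11 + (1) * hC22 + (2) * A 1 1 * hC22 + (-2) * A 1 2 * hC12 + (-2) * A 2 1 * hC12 + (-2) * hK00 + (2) * A 1 1 * hK00 + (2) * A 2 2 * hK00 + (-2) * A 0 1 * hK01 + (-2) * A 0 2 * hK02
    · rw [PhiMat]
      ext i j
      fin_cases i <;> fin_cases j <;>
        simp [Matrix.smul_apply]
      · linear_combination (-1) * hC00 + (1) * hC11 + (-2) * A 2 2 * hC11 + (1) * hC22 + (-2) * A 1 1 * hC22 + (2) * A 1 2 * hC12 + (2) * A 2 1 * hC12 + (-2) * hR00 + (-2) * hK00 + (-2) * A 1 1 * hK00 + (-2) * A 2 2 * hK00 + (2) * A 0 1 * hK01 + (2) * A 0 2 * hK02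
      · linear_combination (2) * A 0 1 * hC22 + (-2) * hC01 + (-2) * A 0 2 * hC12 + (-2) * hR01 + (-2) * hK01 + (-2) * A 2 2 * hK01 + (2) * A 1 2 * hK02
      · linear_combination (2) * A 0 2 * hC11 + (-2) * hC02 + (-2) * A 0 1 * hC12 + (-2) * hR02 + (2) * A 2 1 * hK01 + (-2) * hK02 + (-2) * A 1 1 * hK02
      · linear_combination (2) * A 0 1 * hC22 + (-2) * hC01 + (-2) * A 0 2 * hC12 + (-2) * hR01 + (-2) * hK01 + (-2) * A 2 2 * hK01 + (2) * A 1 2 * hK02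
      · linear_combination (1) * hC00 + (-1) * hC11 + (-2) * A 2 2 * hC11 + (1) * hC22 + (2) * A 1 1 * hC22 + (-2) * A 1 2 * hC12 + (2) * A 2 1 * hC12 + (-2) * hR11 + (2) * hK00 + (-2) * A 1 1 * hK00 + (2) * A 2 2 * hK00 + (2) * A 0 1 * hK01 + (-2) * A 0 2 * hK02
      · linear_combination (2) * A 1 2 * hC11 + (2) * A 2 1 * hC22 + (-2) * hC12 + (-2) * A 1 1 * hC12 + (-2) * A 2 2 * hC12 + (-2) * hR12 + (-2) * A 1 2 * hK00 + (-2) * A 2 1 * hK00 + (2) * A 0 2 * hK01 + (2) * A 0 1 * hK02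
      · linear_combination (2) * A 0 2 * hC11 + (-2) * hC02 + (-2) * A 0 1 * hC12 + (-2) * hR02 + (2) * A 2 1 * hK01 + (-2) * hK02 + (-2) * A 1 1 * hK02
      · linear_combination (2) * A 1 2 * hC11 + (2) * A 2 1 * hC22 + (-2) * hC12 + (-2) * A 1 1 * hC12 + (-2) * A 2 2 * hC12 + (-2) * hR12 + (-2) * A 1 2 * hK00 + (-2) * A 2 1 * hK00 + (2) * A 0 2 * hK01 + (2) * A 0 1 * hK02
      · linear_combination (-1) * hC00 + (-1) * hC11 + (2) * A 2 2 * hC11 + (-3) * hC22 + (-2) * A 1 1 * hC22 + (2) * A 1 2 * hC12 + (-2) * A 2 1 * hC12 + (2) * hR00 + (2) * hR11 + (2) * hK00 + (2) * A 1 1 * hK00 + (-2) * A 2 2 * hK00 + (-2) * A 0 1 * hK01 + (2) * A 0 2 * hK02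
  · -- case 1
    refine exists_of_q0 A (⟨(A 2 1 - A 1 2), (1 + A 0 0 - A 1 1 - A 2 2), (A 0 1 + A 1 0), (A 0 2 + A 2 0)⟩ : ℍ[ℝ]) (1 + A 0 0 - A 1 1 - A 2 2) (by linarith) ?_ ?_
    · rw [normSq_mk_H]
      show (A 2 1 - A 1 2)^2 + (1 + A 0 0 - A 1 1 - A 2 2)^2 + (A 0 1 + A 1 0)^2 + (A 0 2 + A 2 0)^2 = 4 * (1 + A 0 0 - A 1 1 - A 2 2)
      linear_combination (1) * hC00 + (1) * hC11 + (-2) * A 2 2 * hC11 + (1) * hC22 + (-2) * A 1 1 * hC22 + (2) * A 1 2 * hC12 + (2) * A 2 1 * hC12 + (-2) * hK00 + (-2) * A 1 1 * hK00 + (-2) * A 2 2 * hK00 + (2) * A 0 1 * hK01 + (2) * A 0 2 * hK02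
    · rw [PhiMat]
      ext i j
      fin_cases i <;> fin_cases j <;>
        simp [Matrix.smul_apply]
      · linear_combination (-1) * hC00 + (1) * hC11 + (2) * A 2 2 * hC11 + (1) * hC22 + (2) * A 1 1 * hC22 + (-2) * A 1 2 * hC12 + (-2) * A 2 1 * hC12 + (-2) * hR00 + (-2) * hK00 + (2) * A 1 1 * hK00 + (2) * A 2 2 * hK00 + (-2) * A 0 1 * hK01 + (-2) * A 0 2 * hK02
      · linear_combination (2) * A 0 1 * hC22 + (-2) * hC01 + (-2) * A 0 2 * hC12 + (2) * hR01 + (2) * hK01 + (-2) * A 2 2 * hK01 + (2) * A 1 2 * hK02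
      · linear_combination (2) * A 0 2 * hC11 + (-2) * hC02 + (-2) * A 0 1 * hC12 + (2) * hR02 + (2) * A 2 1 * hK01 + (2) * hK02 + (-2) * A 1 1 * hK02
      · linear_combination (-2) * A 0 1 * hC22 + (2) * hC01 + (2) * A 0 2 * hC12 + (-2) * hR01 + (-2) * hK01 + (2) * A 2 2 * hK01 + (-2) * A 1 2 * hK02
      · linear_combination (-1) * hC00 + (1) * hC11 + (-2) * A 2 2 * hC11 + (-1) * hC22 + (2) * A 1 1 * hC22 + (-2) * A 1 2 * hC12 + (2) * A 2 1 * hC12 + (2) * hR11 + (-2) * hK00 + (-2) * A 1 1 * hK00 + (2) * A 2 2 * hK00 + (2) * A 0 1 * hK01 + (-2) * A 0 2 * hK02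
      · linear_combination (2) * A 1 2 * hC11 + (2) * A 2 1 * hC22 + (2) * hC12 + (-2) * A 1 1 * hC12 + (-2) * A 2 2 * hC12 + (2) * hR12 + (-2) * A 1 2 * hK00 + (-2) * A 2 1 * hK00 + (2) * A 0 2 * hK01 + (2) * A 0 1 * hK02
      · linear_combination (-2) * A 0 2 * hC11 + (2) * hC02 + (2) * A 0 1 * hC12 + (-2) * hR02 + (-2) * A 2 1 * hK01 + (-2) * hK02 + (2) * A 1 1 * hK02
      · linear_combination (2) * A 1 2 * hC11 + (2) * A 2 1 * hC22 + (2) * hC12 + (-2) * A 1 1 * hC12 + (-2) * A 2 2 * hC12 + (2) * hR12 + (-2) * A 1 2 * hK00 + (-2) * A 2 1 * hK00 + (2) * A 0 2 * hK01 + (2) * A 0 1 * hK02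
      · linear_combination (1) * hC00 + (1) * hC11 + (2) * A 2 2 * hC11 + (3) * hC22 + (-2) * A 1 1 * hC22 + (2) * A 1 2 * hC12 + (-2) * A 2 1 * hC12 + (-2) * hR00 + (-2) * hR11 + (-2) * hK00 + (2) * A 1 1 * hK00 + (-2) * A 2 2 * hK00 + (-2) * A 0 1 * hK01 + (2) * A 0 2 * hK02
  · -- case 2
    refine exists_of_q0 A (⟨(A 0 2 - A 2 0), (A 0 1 + A 1 0), (1 - A 0 0 + A 1 1 - A 2 2), (A 1 2 + A 2 1)⟩ : ℍ[ℝ]) (1 - A 0 0 + A 1 1 - A 2 2) (by linarith) ?_ ?_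
    · rw [normSq_mk_H]
      show (A 0 2 - A 2 0)^2 + (A 0 1 + A 1 0)^2 + (1 - A 0 0 + A 1 1 - A 2 2)^2 + (A 1 2 + A 2 1)^2 = 4 * (1 - A 0 0 + A 1 1 - A 2 2)
      linear_combination (1) * hC00 + (1) * hC11 + (-2) * A 2 2 * hC11 + (1) * hC22 + (2) * A 1 1 * hC22 + (-2) * A 1 2 * hC12 + (2) * A 2 1 * hC12 + (2) * hK00 + (-2) * A 1 1 * hK00 + (2) * A 2 2 * hK00 + (2) * A 0 1 * hK01 + (-2) * A 0 2 * hK02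
    · rw [PhiMat]
      ext i j
      fin_cases i <;> fin_cases j <;>
        simp [Matrix.smul_apply]
      · linear_combination (1) * hC00 + (-1) * hC11 + (-2) * A 2 2 * hC11 + (-1) * hC22 + (2) * A 1 1 * hC22 + (-2) * A 1 2 * hC12 + (2) * A 2 1 * hC12 + (2) * hR00 + (-2) * hK00 + (-2) * A 1 1 * hK00 + (2) * A 2 2 * hK00 + (2) * A 0 1 * hK01 + (-2) * A 0 2 * hK02
      · linear_combination (2) * A 0 1 * hC22 + (2) * hC01 + (-2) * A 0 2 * hC12 + (-2) * hR01 + (2) * hK01 + (-2) * A 2 2 * hK01 + (2) * A 1 2 * hK02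
      · linear_combination (2) * A 0 2 * hC11 + (2) * hC02 + (-2) * A 0 1 * hC12 + (2) * hR02 + (2) * A 2 1 * hK01 + (-2) * hK02 + (-2) * A 1 1 * hK02
      · linear_combination (-2) * A 0 1 * hC22 + (-2) * hC01 + (2) * A 0 2 * hC12 + (2) * hR01 + (-2) * hK01 + (2) * A 2 2 * hK01 + (-2) * A 1 2 * hK02
      · linear_combination (1) * hC00 + (-1) * hC11 + (2) * A 2 2 * hC11 + (1) * hC22 + (2) * A 1 1 * hC22 + (-2) * A 1 2 * hC12 + (-2) * A 2 1 * hC12 + (-2) * hR11 + (-2) * hK00 + (2) * A 1 1 * hK00 + (2) * A 2 2 * hK00 + (-2) * A 0 1 * hK01 + (-2) * A 0 2 * hK02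
      · linear_combination (2) * A 1 2 * hC11 + (-2) * A 2 1 * hC22 + (-2) * hC12 + (-2) * A 1 1 * hC12 + (2) * A 2 2 * hC12 + (2) * hR12 + (2) * A 1 2 * hK00 + (-2) * A 2 1 * hK00 + (-2) * A 0 2 * hK01 + (2) * A 0 1 * hK02
      · linear_combination (2) * A 0 2 * hC11 + (2) * hC02 + (-2) * A 0 1 * hC12 + (2) * hR02 + (2) * A 2 1 * hK01 + (-2) * hK02 + (-2) * A 1 1 * hK02
      · linear_combination (-2) * A 1 2 * hC11 + (2) * A 2 1 * hC22 + (2) * hC12 + (2) * A 1 1 * hC12 + (-2) * A 2 2 * hC12 + (-2) * hR12 + (-2) * A 1 2 * hK00 + (2) * A 2 1 * hK00 + (2) * A 0 2 * hK01 + (-2) * A 0 1 * hK02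
      · linear_combination (1) * hC00 + (1) * hC11 + (2) * A 2 2 * hC11 + (3) * hC22 + (2) * A 1 1 * hC22 + (-2) * A 1 2 * hC12 + (-2) * A 2 1 * hC12 + (-2) * hR00 + (-2) * hR11 + (2) * hK00 + (2) * A 1 1 * hK00 + (2) * A 2 2 * hK00 + (-2) * A 0 1 * hK01 + (-2) * A 0 2 * hK02
  · -- case 3
    refine exists_of_q0 A (⟨(A 1 0 - A 0 1), (A 0 2 + A 2 0), (A 1 2 + A 2 1), (1 - A 0 0 - A 1 1 + A 2 2)⟩ : ℍ[ℝ]) (1 - A 0 0 - A 1 1 + A 2 2) (by linarith) ?_ ?_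
    · rw [normSq_mk_H]
      show (A 1 0 - A 0 1)^2 + (A 0 2 + A 2 0)^2 + (A 1 2 + A 2 1)^2 + (1 - A 0 0 - A 1 1 + A 2 2)^2 = 4 * (1 - A 0 0 - A 1 1 + A 2 2)
      linear_combination (1) * hC00 + (1) * hC11 + (2) * A 2 2 * hC11 + (1) * hC22 + (-2) * A 1 1 * hC22 + (2) * A 1 2 * hC12 + (-2) * A 2 1 * hC12 + (2) * hK00 + (2) * A 1 1 * hK00 + (-2) * A 2 2 * hK00 + (-2) * A 0 1 * hK01 + (2) * A 0 2 * hK02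
    · rw [PhiMat]
      ext i j
      fin_cases i <;> fin_cases j <;>
        simp [Matrix.smul_apply]
      · linear_combination (1) * hC00 + (-1) * hC11 + (2) * A 2 2 * hC11 + (-1) * hC22 + (-2) * A 1 1 * hC22 + (2) * A 1 2 * hC12 + (-2) * A 2 1 * hC12 + (2) * hR00 + (-2) * hK00 + (2) * A 1 1 * hK00 + (-2) * A 2 2 * hK00 + (-2) * A 0 1 * hK01 + (2) * A 0 2 * hK02
      · linear_combination (2) * A 0 1 * hC22 + (2) * hC01 + (-2) * A 0 2 * hC12 + (2) * hR01 + (-2) * hK01 + (-2) * A 2 2 * hK01 + (2) * A 1 2 * hK02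
      · linear_combination (2) * A 0 2 * hC11 + (2) * hC02 + (-2) * A 0 1 * hC12 + (-2) * hR02 + (2) * A 2 1 * hK01 + (2) * hK02 + (-2) * A 1 1 * hK02
      · linear_combination (2) * A 0 1 * hC22 + (2) * hC01 + (-2) * A 0 2 * hC12 + (2) * hR01 + (-2) * hK01 + (-2) * A 2 2 * hK01 + (2) * A 1 2 * hK02
      · linear_combination (-1) * hC00 + (1) * hC11 + (2) * A 2 2 * hC11 + (-1) * hC22 + (2) * A 1 1 * hC22 + (-2) * A 1 2 * hC12 + (-2) * A 2 1 * hC12 + (2) * hR11 + (2) * hK00 + (2) * A 1 1 * hK00 + (2) * A 2 2 * hK00 + (-2) * A 0 1 * hK01 + (-2) * A 0 2 * hK02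
      · linear_combination (2) * A 1 2 * hC11 + (-2) * A 2 1 * hC22 + (2) * hC12 + (-2) * A 1 1 * hC12 + (2) * A 2 2 * hC12 + (-2) * hR12 + (2) * A 1 2 * hK00 + (-2) * A 2 1 * hK00 + (-2) * A 0 2 * hK01 + (2) * A 0 1 * hK02
      · linear_combination (-2) * A 0 2 * hC11 + (-2) * hC02 + (2) * A 0 1 * hC12 + (2) * hR02 + (-2) * A 2 1 * hK01 + (-2) * hK02 + (2) * A 1 1 * hK02
      · linear_combination (-2) * A 1 2 * hC11 + (2) * A 2 1 * hC22 + (-2) * hC12 + (2) * A 1 1 * hC12 + (-2) * A 2 2 * hC12 + (2) * hR12 + (-2) * A 1 2 * hK00 + (2) * A 2 1 * hK00 + (2) * A 0 2 * hK01 + (-2) * A 0 1 * hK02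
      · linear_combination (-1) * hC00 + (-1) * hC11 + (2) * A 2 2 * hC11 + (-3) * hC22 + (2) * A 1 1 * hC22 + (-2) * A 1 2 * hC12 + (-2) * A 2 1 * hC12 + (2) * hR00 + (2) * hR11 + (-2) * hK00 + (2) * A 1 1 * hK00 + (2) * A 2 2 * hK00 + (-2) * A 0 1 * hK01 + (-2) * A 0 2 * hK02


theorem quaternion_rotation_correspondence :
    (∀ q : ℍ[ℝ], ‖q‖ = 1 → ∀ u : ℍ[ℝ], u.re = 0 →
      (q * u * star q).re = 0 ∧ ‖q * u * star q‖ = ‖u‖) ∧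
    (∀ q : ℍ[ℝ], ‖q‖ = 1 →
      (∀ u : Fin 3 → ℝ, Phi q *ᵥ u = imPart (q * toQuat u * star q)) ∧ Phi q ∈ SO3) ∧
    (∀ q q' : ℍ[ℝ], ‖q‖ = 1 → ‖q'‖ = 1 → Phi (q * q') = Phi q * Phi q') ∧
    (∀ A ∈ SO3, ∃ q : ℍ[ℝ], ‖q‖ = 1 ∧ Phi q = A) ∧
    (∀ q q' : ℍ[ℝ], ‖q‖ = 1 → ‖q'‖ = 1 → (Phi q = Phi q' ↔ q' = q ∨ q' = -q)) := by
  refine ⟨?_, ?_, ?_, ?_, ?_⟩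
  · intro q hq u hu
    constructor
    · rw [re_conjAct, hu, mul_zero]
    · rw [norm_mul, norm_mul, norm_star, hq, one_mul, mul_one]
  · intro q hq
    exact ⟨Phi_mulVec q, PhiSO3 q hq⟩
  · intro q q' _ _
    exact Phi_mul q q'
  · intro A hA
    exact so3_surj A hA
  · intro q q' hq hq'
    constructor
    · exact pm_of_Phi_eq q q' hq hq'
    · rintro (rfl | rfl)
      · rfl
      · exact (Phi_neg q).symm
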